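/- (AND-gadget) Suppose s, s', t₁, t₁', t₂, t₂' are states in a pLTS such that t₁ ≁ t₂', and the only transitions outgoing from s and s' are s –a→ (t₁ with probability 1/2, t₂ with probability 1/2) and s' –a→ (t₁' with probability 1/2, t₂' with probability 1/2). Then s ∼ s' if and only if (t₁ ∼ t₁' and t₂ ∼ t₂'). -/

import Mathlib

open scoped ENNReal

noncomputable section

/-- A probabilistic labelled transition system (pLTS): states `S`, alphabet `A`,
and a transition relation into probability distributions (`PMF`s) on `S`. -/
structure PLTS (S : Type) (A : Type) where
  Tr : S → A → PMF S → Prop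

namespace PLTS

variable {S A : Type}

/-- The mass that a distribution assigns to a set of states. -/
def mass (d : PMF S) (E : Set S) : ℝ≥0∞ := ∑' s : E, d s

/-- Two distributions are `r`-equivalent if they assign equal mass to every
`r`-equivalence class (for an equivalence `r`, the classes are the sets `{t | r s t}`). -/
def REquiv (r : S → S → Prop) (d d' : PMF S) : Prop :=
  ∀ s : S, mass d {t | r s t} = mass d' {t | r s t}

/-- An equivalence relation is a bisimulation if related states can match
each other's transitions with `r`-equivalent target distributions. -/
def IsBisimulation (L : PLTS S A) (r : S → S → Prop) : Prop :=
  Equivalence r ∧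
    ∀ s t, r s t → ∀ a d, L.Tr s a d → ∃ d', L.Tr t a d' ∧ REquiv r d d'

/-- Bisimilarity: the union of all bisimulation relations. -/
def Bisim (L : PLTS S A) (s t : S) : Prop :=
  ∃ r, L.IsBisimulation r ∧ r s t

/-- The bisimulation approximants `∼ₙ`. -/
def approx (L : PLTS S A) : ℕ → S → S → Prop
  | 0 => fun _ _ => True
  | n + 1 => fun s t =>
      (∀ a d, L.Tr s a d → ∃ d', L.Tr t a d' ∧ REquiv (L.approx n) d d') ∧
      (∀ a d', L.Tr t a d' → ∃ d, L.Tr s a d ∧ REquiv (L.approx n) d d')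

/-- A pLTS is finitely branching if every state has finitely many transitions. -/
def FinBranching (L : PLTS S A) : Prop :=
  ∀ s, {p : A × PMF S | L.Tr s p.1 p.2}.Finite

/-- One-step successor relation: `s → s'` iff some transition of `s` gives `s'`
positive probability. -/
def Step (L : PLTS S A) (s s' : S) : Prop :=
  ∃ a d, L.Tr s a d ∧ d s' ≠ 0

end PLTS

namespace PLTS

variable {S A : Type}

/-- `d` is the distribution `x | y`: two distinct points each of probability 1/2. -/
def TwoHalf (d : PMF S) (x y : S) : Prop :=
  x ≠ y ∧ d x = 1 / 2 ∧ d y = 1 / 2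

/-- The only transition outgoing from `s` is `s –a→ d`. -/
def OnlyTr (L : PLTS S A) (s : S) (a : A) (d : PMF S) : Prop :=
  L.Tr s a d ∧ ∀ b e, L.Tr s b e → b = a ∧ e = d

end PLTS

namespace PLTSAux

variable {S A : Type}

lemma requiv_refl (r : S → S → Prop) (d : PMF S) : PLTS.REquiv r d d := fun _ => rfl

lemma requiv_symm {r : S → S → Prop} {d d' : PMF S} (h : PLTS.REquiv r d d') :
    PLTS.REquiv r d' d := fun s => (h s).symm

lemma requiv_trans {r : S → S → Prop} {d₁ d₂ d₃ : PMF S}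
    (h : PLTS.REquiv r d₁ d₂) (h' : PLTS.REquiv r d₂ d₃) : PLTS.REquiv r d₁ d₃ :=
  fun s => (h s).trans (h' s)

/-- Monotonicity: `r`-equivalence implies `r'`-equivalence for any coarser equivalence. -/
lemma requiv_mono {r r' : S → S → Prop} (hr : Equivalence r) (hr' : Equivalence r')
    (hsub : ∀ x y, r x y → r' x y) {d d' : PMF S} (h : PLTS.REquiv r d d') :
    PLTS.REquiv r' d d' := by
  intro s₀
  letI st : Setoid S := ⟨r, hr⟩
  have hm : ∀ g : S → ℝ≥0∞,
      ∑' x, g x = ∑' q : Quotient st, ∑' x : {y // Quotient.mk st y = q}, g x := by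
    intro g
    rw [← (Equiv.sigmaFiberEquiv (Quotient.mk st)).tsum_eq g, ENNReal.tsum_sigma']
    rfl
  show PLTS.mass d {t | r' s₀ t} = PLTS.mass d' {t | r' s₀ t}
  set E : Set S := {t | r' s₀ t} with hE
  rw [PLTS.mass, PLTS.mass, tsum_subtype E (d : S → ℝ≥0∞), tsum_subtype E (d' : S → ℝ≥0∞),
    hm, hm]
  refine tsum_congr fun q => ?_
  obtain ⟨t, rfl⟩ := q.exists_rep
  have hfib : {y | Quotient.mk st y = Quotient.mk st t} = {y | r t y} := by
    ext y
    simp only [Set.mem_setOf_eq, Quotient.eq]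
    exact ⟨fun h => hr.symm h, fun h => hr.symm h⟩
  have conv : ∀ g : S → ℝ≥0∞,
      ∑' x : {y // Quotient.mk st y = Quotient.mk st t}, g ↑x
        = ∑' x : ({y | r t y} : Set S), g ↑x := by
    intro g
    show ∑' x : ({y | Quotient.mk st y = Quotient.mk st t} : Set S), g ↑x = _
    rw [hfib]
  rw [conv, conv]
  by_cases hst : r' s₀ t
  · have hsubE : ({y | r t y} : Set S) ⊆ E := fun y hy => hr'.trans hst (hsub t y hy)
    have h1 : ∑' x : ({y | r t y} : Set S), E.indicator (d : S → ℝ≥0∞) ↑x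
        = PLTS.mass d {y | r t y} :=
      tsum_congr fun x => Set.indicator_of_mem (hsubE x.2) _
    have h2 : ∑' x : ({y | r t y} : Set S), E.indicator (d' : S → ℝ≥0∞) ↑x
        = PLTS.mass d' {y | r t y} :=
      tsum_congr fun x => Set.indicator_of_mem (hsubE x.2) _
    rw [h1, h2, h t]
  · have hdisj : ∀ x : ({y | r t y} : Set S), (x : S) ∉ E := by
      rintro ⟨x, hx⟩ hxE
      exact hst (hr'.trans hxE (hr'.symm (hsub t x hx)))
    have h1 : ∀ g : S → ℝ≥0∞,
        ∑' x : ({y | r t y} : Set S), E.indicator g ↑x = 0 := by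
      intro g
      rw [show (fun x : ({y | r t y} : Set S) => E.indicator g ↑x) = fun _ => 0
        from funext fun x => Set.indicator_of_notMem (hdisj x) _, tsum_zero]
    rw [h1, h1]

lemma bisim_refl (L : PLTS S A) (x : S) : L.Bisim x x := by
  refine ⟨Eq, ⟨eq_equivalence, ?_⟩, rfl⟩
  rintro u v rfl b e he
  exact ⟨e, he, requiv_refl _ _⟩

lemma bisim_symm {L : PLTS S A} {x y : S} (h : L.Bisim x y) : L.Bisim y x := by
  obtain ⟨r, hr, hxy⟩ := h
  exact ⟨r, hr, hr.1.symm hxy⟩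

lemma bisim_trans {L : PLTS S A} {x y z : S} (h : L.Bisim x y) (h' : L.Bisim y z) :
    L.Bisim x z := by
  obtain ⟨r₁, hr₁, hxy⟩ := h
  obtain ⟨r₂, hr₂, hyz⟩ := h'
  set R := Relation.EqvGen (fun p q => r₁ p q ∨ r₂ p q) with hR
  have hReq : Equivalence R := Relation.EqvGen.is_equivalence _
  have key : ∀ u v, R u v →
      (∀ b e, L.Tr u b e → ∃ e', L.Tr v b e' ∧ PLTS.REquiv R e e') ∧
      (∀ b e, L.Tr v b e → ∃ e', L.Tr u b e' ∧ PLTS.REquiv R e e') := by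
    intro u v huv
    induction huv with
    | rel u v huv =>
      rcases huv with h | h
      · constructor
        · intro b e he
          obtain ⟨e', he', heq⟩ := hr₁.2 u v h b e he
          exact ⟨e', he', requiv_mono hr₁.1 hReq
            (fun p q hpq => Relation.EqvGen.rel p q (Or.inl hpq)) heq⟩
        · intro b e he
          obtain ⟨e', he', heq⟩ := hr₁.2 v u (hr₁.1.symm h) b e he
          exact ⟨e', he', requiv_mono hr₁.1 hReq
            (fun p q hpq => Relation.EqvGen.rel p q (Or.inl hpq)) heq⟩
      · constructor
        · intro b e he
          obtain ⟨e', he', heq⟩ := hr₂.2 u v h b e he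
          exact ⟨e', he', requiv_mono hr₂.1 hReq
            (fun p q hpq => Relation.EqvGen.rel p q (Or.inr hpq)) heq⟩
        · intro b e he
          obtain ⟨e', he', heq⟩ := hr₂.2 v u (hr₂.1.symm h) b e he
          exact ⟨e', he', requiv_mono hr₂.1 hReq
            (fun p q hpq => Relation.EqvGen.rel p q (Or.inr hpq)) heq⟩
    | refl u => exact ⟨fun b e he => ⟨e, he, requiv_refl _ _⟩,
        fun b e he => ⟨e, he, requiv_refl _ _⟩⟩
    | symm u v _ ih => exact ⟨ih.2, ih.1⟩
    | trans u v w _ _ ih₁ ih₂ =>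
      constructor
      · intro b e he
        obtain ⟨e₁, he₁, hq₁⟩ := ih₁.1 b e he
        obtain ⟨e₂, he₂, hq₂⟩ := ih₂.1 b e₁ he₁
        exact ⟨e₂, he₂, requiv_trans hq₁ hq₂⟩
      · intro b e he
        obtain ⟨e₁, he₁, hq₁⟩ := ih₂.2 b e he
        obtain ⟨e₂, he₂, hq₂⟩ := ih₁.2 b e₁ he₁
        exact ⟨e₂, he₂, requiv_trans hq₁ hq₂⟩
  refine ⟨R, ⟨hReq, fun u v huv b e he => (key u v huv).1 b e he⟩, ?_⟩
  exact hReq.trans (Relation.EqvGen.rel _ _ (Or.inl hxy)) (Relation.EqvGen.rel _ _ (Or.inr hyz))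

lemma bisim_equivalence (L : PLTS S A) : Equivalence L.Bisim :=
  ⟨bisim_refl L, bisim_symm, bisim_trans⟩

/-- Bisimilarity itself transfers transitions. -/
lemma bisim_transfer {L : PLTS S A} {x y : S} (h : L.Bisim x y) {b : A} {e : PMF S}
    (he : L.Tr x b e) : ∃ e', L.Tr y b e' ∧ PLTS.REquiv L.Bisim e e' := by
  obtain ⟨r, hr, hxy⟩ := h
  obtain ⟨e', he', heq⟩ := hr.2 x y hxy b e he
  exact ⟨e', he', requiv_mono hr.1 (bisim_equivalence L)
    (fun p q hpq => ⟨r, hr, hpq⟩) heq⟩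

open Classical in
lemma mass_twoHalf {d : PMF S} {x y : S} (h : PLTS.TwoHalf d x y) (E : Set S) :
    PLTS.mass d E = (if x ∈ E then (1 : ℝ≥0∞) / 2 else 0)
      + (if y ∈ E then (1 : ℝ≥0∞) / 2 else 0) := by
  classical
  obtain ⟨hxy, hx, hy⟩ := h
  have hz : ∀ z, z ≠ x → z ≠ y → d z = 0 := by
    intro z hzx hzy
    have hle : d x + d y + d z ≤ 1 := by
      have := ENNReal.sum_le_tsum (f := (d : S → ℝ≥0∞)) ({x, y, z} : Finset S)
      rw [d.tsum_coe] at this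
      refine le_trans (le_of_eq ?_) this
      rw [Finset.sum_insert (by simp [hxy, hzx.symm]),
        Finset.sum_insert (by simp [hzy.symm]), Finset.sum_singleton]
      ring
    rw [hx, hy] at hle
    have : (1 : ℝ≥0∞) + d z ≤ 1 + 0 := by
      calc (1 : ℝ≥0∞) + d z = 1/2 + 1/2 + d z := by rw [ENNReal.add_halves]
      _ ≤ 1 := hle
      _ = 1 + 0 := by rw [add_zero]
    exact le_antisymm ((ENNReal.add_le_add_iff_left ENNReal.one_ne_top).1 this) zero_le
  rw [PLTS.mass, tsum_subtype E (d : S → ℝ≥0∞),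
    tsum_eq_sum (s := ({x, y} : Finset S)) ?_]
  · rw [Finset.sum_insert (by simp [hxy]), Finset.sum_singleton]
    by_cases hxE : x ∈ E <;> by_cases hyE : y ∈ E <;>
      simp [Set.indicator, hxE, hyE, hx, hy]
  · intro z hzm
    simp only [Finset.mem_insert, Finset.mem_singleton, not_or] at hzm
    simp [Set.indicator, hz z hzm.1 hzm.2]

end PLTSAux


open PLTSAux

/-- **AND-gadget.** If `t₁ ≁ t₂'` and the only transitions from
`s, s'` are `s –a→ t₁ | t₂` and `s' –a→ t₁' | t₂'`, then
`s ∼ s'` iff (`t₁ ∼ t₁'` and `t₂ ∼ t₂'`). -/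
theorem and_gadget (S A : Type) [Countable S] (L : PLTS S A) (a : A)
    (s s' t₁ t₁' t₂ t₂' : S) (d d' : PMF S)
    (hd : PLTS.TwoHalf d t₁ t₂) (hd' : PLTS.TwoHalf d' t₁' t₂')
    (hs : L.OnlyTr s a d) (hs' : L.OnlyTr s' a d')
    (hne : ¬ L.Bisim t₁ t₂') :
    L.Bisim s s' ↔ (L.Bisim t₁ t₁' ∧ L.Bisim t₂ t₂') := by
  constructor
  · rintro ⟨r, hr, hss'⟩
    have hsubB : ∀ x y, r x y → L.Bisim x y := fun x y h => ⟨r, hr, h⟩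
    obtain ⟨f, hf, heq⟩ := hr.2 s s' hss' a d hs.1
    obtain ⟨-, rfl⟩ := hs'.2 a f hf
    constructor
    · have h1 := heq t₁
      rw [mass_twoHalf hd, mass_twoHalf hd'] at h1
      have ht₁ : t₁ ∈ {t | r t₁ t} := hr.1.refl t₁
      have ht₂' : t₂' ∉ {t | r t₁ t} := fun hmem => hne (hsubB _ _ hmem)
      rw [if_pos ht₁, if_neg ht₂'] at h1
      by_cases ht₁' : t₁' ∈ {t | r t₁ t}
      · exact hsubB _ _ ht₁'
      · exfalso
        rw [if_neg ht₁'] at h1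
        by_cases ht₂ : t₂ ∈ {t | r t₁ t} <;> simp [ht₂] at h1
    · have h2 := heq t₂'
      rw [mass_twoHalf hd, mass_twoHalf hd'] at h2
      have ht₂' : t₂' ∈ {t | r t₂' t} := hr.1.refl t₂'
      have ht₁ : t₁ ∉ {t | r t₂' t} := fun hmem => hne (hsubB _ _ (hr.1.symm hmem))
      rw [if_pos ht₂', if_neg ht₁] at h2
      by_cases ht₂ : t₂ ∈ {t | r t₂' t}
      · exact bisim_symm (hsubB _ _ ht₂)
      · exfalso
        rw [if_neg ht₂] at h2
        by_cases ht₁' : t₁' ∈ {t | r t₂' t}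
        · simp [ht₁', eq_comm, ENNReal.inv_two_add_inv_two] at h2
        · simp [ht₁'] at h2
          exact ENNReal.ofNat_ne_top (ENNReal.inv_eq_zero.mp h2.symm)
  · rintro ⟨h₁, h₂⟩
    have hBeq := bisim_equivalence L
    set R : S → S → Prop := fun x y => L.Bisim x y ∨
      (L.Bisim x s ∧ L.Bisim s' y) ∨ (L.Bisim x s' ∧ L.Bisim s y) with hRdef
    have hBsub : ∀ x y, L.Bisim x y → R x y := fun x y h => Or.inl h
    have hReq : Equivalence R := by
      constructor
      · intro x; exact Or.inl (bisim_refl L x)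
      · intro x y h
        rcases h with h | ⟨g1, g2⟩ | ⟨g1, g2⟩
        · exact Or.inl (bisim_symm h)
        · exact Or.inr (Or.inr ⟨bisim_symm g2, bisim_symm g1⟩)
        · exact Or.inr (Or.inl ⟨bisim_symm g2, bisim_symm g1⟩)
      · intro x y z hxy hyz
        rcases hxy with h | ⟨h1, h2⟩ | ⟨h1, h2⟩ <;>
            rcases hyz with g | ⟨g1, g2⟩ | ⟨g1, g2⟩
        · exact Or.inl (bisim_trans h g)
        · exact Or.inr (Or.inl ⟨bisim_trans h g1, g2⟩)
        · exact Or.inr (Or.inr ⟨bisim_trans h g1, g2⟩)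
        · exact Or.inr (Or.inl ⟨h1, bisim_trans h2 g⟩)
        · exact Or.inl (bisim_trans h1
            (bisim_trans (bisim_symm (bisim_trans h2 g1)) g2))
        · exact Or.inl (bisim_trans h1 g2)
        · exact Or.inr (Or.inr ⟨h1, bisim_trans h2 g⟩)
        · exact Or.inl (bisim_trans h1 g2)
        · exact Or.inl (bisim_trans h1
            (bisim_trans (bisim_symm (bisim_trans h2 g1)) g2))
    have hdd' : PLTS.REquiv R d d' := by
      intro u
      rw [mass_twoHalf hd, mass_twoHalf hd']
      have e1 : (t₁ ∈ {t | R u t}) ↔ (t₁' ∈ {t | R u t}) :=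
        ⟨fun h => hReq.trans h (hBsub _ _ h₁),
         fun h => hReq.trans h (hReq.symm (hBsub _ _ h₁))⟩
      have e2 : (t₂ ∈ {t | R u t}) ↔ (t₂' ∈ {t | R u t}) :=
        ⟨fun h => hReq.trans h (hBsub _ _ h₂),
         fun h => hReq.trans h (hReq.symm (hBsub _ _ h₂))⟩
      by_cases m1 : t₁ ∈ {t | R u t} <;> by_cases m2 : t₂ ∈ {t | R u t}
      · rw [if_pos m1, if_pos m2, if_pos (e1.mp m1), if_pos (e2.mp m2)]
      · rw [if_pos m1, if_neg m2, if_pos (e1.mp m1), if_neg (fun h => m2 (e2.mpr h))]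
      · rw [if_neg m1, if_pos m2, if_neg (fun h => m1 (e1.mpr h)), if_pos (e2.mp m2)]
      · rw [if_neg m1, if_neg m2, if_neg (fun h => m1 (e1.mpr h)),
          if_neg (fun h => m2 (e2.mpr h))]
    have step : ∀ x, L.Bisim x s → ∀ b e, L.Tr x b e →
        b = a ∧ PLTS.REquiv R e d := by
      intro x hx b e he
      obtain ⟨f, hf, heq⟩ := bisim_transfer hx he
      obtain ⟨hb, rfl⟩ := hs.2 b f hf
      exact ⟨hb, requiv_mono hBeq hReq hBsub heq⟩
    have step' : ∀ x, L.Bisim x s' → ∀ b e, L.Tr x b e →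
        b = a ∧ PLTS.REquiv R e d' := by
      intro x hx b e he
      obtain ⟨f, hf, heq⟩ := bisim_transfer hx he
      obtain ⟨hb, rfl⟩ := hs'.2 b f hf
      exact ⟨hb, requiv_mono hBeq hReq hBsub heq⟩
    have htrans : ∀ x y, R x y → ∀ b e, L.Tr x b e →
        ∃ e', L.Tr y b e' ∧ PLTS.REquiv R e e' := by
      intro x y hxy b e he
      rcases hxy with h | ⟨h1, h2⟩ | ⟨h1, h2⟩
      · obtain ⟨e', he', heq⟩ := bisim_transfer h he
        exact ⟨e', he', requiv_mono hBeq hReq hBsub heq⟩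
      · obtain ⟨hb, heqd⟩ := step x h1 b e he
        subst hb
        obtain ⟨e', he', heq'⟩ := bisim_transfer h2 hs'.1
        exact ⟨e', he', requiv_trans heqd
          (requiv_trans hdd' (requiv_mono hBeq hReq hBsub heq'))⟩
      · obtain ⟨hb, heqd⟩ := step' x h1 b e he
        subst hb
        obtain ⟨e', he', heq'⟩ := bisim_transfer h2 hs.1
        exact ⟨e', he', requiv_trans heqd
          (requiv_trans (requiv_symm hdd') (requiv_mono hBeq hReq hBsub heq'))⟩
    exact ⟨R, ⟨hReq, htrans⟩, Or.inr (Or.inl ⟨bisim_refl L s, bisim_refl L s'⟩)⟩
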